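/- Let L be the first-order language whose symbols are countably infinitely many constant symbols c₀, c₁, c₂, … (indexed by ℕ) and no function or relation symbols, and let φ be the sentence ∀x ∀y (x = y). Then there is no L-sentence ψ such that for every nonempty L-structure M, M satisfies ψ if and only if M has a substructure whose underlying set has exactly one element. In other words, θ(φ) is not expressible by any first-order sentence of L. -/

import Mathlib

open FirstOrder Language

namespace ThetaAux

/-- A natural number as a constant symbol. -/
def con (i : ℕ) : (Language.constantsOn ℕ).Constants := i

variable {M : Type*} [(Language.constantsOn ℕ).Structure M]

/-- The singleton substructure when all constants share a common value. -/
def singletonSub (a : M) (h : ∀ c : (Language.constantsOn ℕ).Constants, (c : M) = a) :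
    (Language.constantsOn ℕ).Substructure M where
  carrier := {a}
  fun_mem := by
    intro n f x _
    match n with
    | 0 =>
      have hx : x = default := Subsingleton.elim _ _
      have : Structure.funMap f x = ((f : (Language.constantsOn ℕ).Constants) : M) := by
        rw [hx]; rfl
      simp [this, h f]
    | n + 1 => exact isEmptyElim f

theorem singleton_iff :
    (∃ S : (Language.constantsOn ℕ).Substructure M, ∃ a : M, (S : Set M) = {a}) ↔
      ∃ a : M, ∀ c : (Language.constantsOn ℕ).Constants, (c : M) = a := by
  constructor
  · rintro ⟨S, a, hS⟩
    refine ⟨a, fun c => ?_⟩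
    have := S.constants_mem c
    rw [← SetLike.mem_coe, hS, Set.mem_singleton_iff] at this
    exact this
  · rintro ⟨a, h⟩
    exact ⟨singletonSub a h, a, rfl⟩

/-- The sentence `c i = c 0`. -/
def eqSent (i : ℕ) : (Language.constantsOn ℕ).Sentence :=
  Term.equal (Constants.term (con i)) (Constants.term (con 0))

theorem realize_eqSent {i : ℕ} :
    M ⊨ eqSent i ↔ ((con i : M) = (con 0 : M)) := by
  simp [eqSent, Sentence.Realize, Formula.realize_equal, Term.realize_constants]

end ThetaAux

/-- In the language with countably many constant symbols `cₙ` (`n : ℕ`) and no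
other symbols, no first-order sentence `ψ` expresses "`M` has a substructure whose underlying
set has exactly one element" (i.e. `θ(∀x ∀y, x = y)` restricted to nonempty models is not
first-order expressible). -/
theorem theta_singleton_not_expressible_with_countably_many_constants :
    ¬ ∃ ψ : (Language.constantsOn ℕ).Sentence,
      ∀ (M : Type u) [(Language.constantsOn ℕ).Structure M], Nonempty M →
        (M ⊨ ψ ↔ ∃ S : (Language.constantsOn ℕ).Substructure M, ∃ a : M, (S : Set M) = {a}) := by
  rintro ⟨ψ, hψ⟩
  classical
  -- the theories
  set T : ℕ → (Language.constantsOn ℕ).Theory :=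
    fun n => insert ψ.not (ThetaAux.eqSent '' Set.Iic n) with hT
  have hmono : Monotone T := fun m n hmn =>
    Set.insert_subset_insert (Set.image_mono (Set.Iic_subset_Iic.2 hmn))
  -- each `T n` is satisfiable, witnessed by a two-valued structure
  have hsat : ∀ n, (T n).IsSatisfiable := by
    intro n
    letI : (Language.constantsOn ℕ).Structure (ULift.{u} Bool) :=
      constantsOn.structure (fun i => ULift.up (decide (i ≤ n)))
    have hmodel : (ULift.{u} Bool) ⊨ T n := by
      refine ⟨fun φ hφ => ?_⟩
      rcases hφ with rfl | ⟨i, hi, rfl⟩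
      · -- `¬ψ` holds since not all constants are equal
        rw [Sentence.Realize, Formula.realize_not]
        intro hpsi
        have := (hψ (ULift.{u} Bool) ⟨ULift.up true⟩).1 hpsi
        rw [ThetaAux.singleton_iff] at this
        obtain ⟨a, ha⟩ := this
        have h0 : ((ThetaAux.con 0 : ULift.{u} Bool)) = a := ha _
        have h1 : ((ThetaAux.con (n + 1) : ULift.{u} Bool)) = a := ha _
        have e0 : (ThetaAux.con 0 : ULift.{u} Bool) =
            ULift.up (decide ((0 : ℕ) ≤ n)) := rfl
        have e1 : (ThetaAux.con (n + 1) : ULift.{u} Bool) =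
            ULift.up (decide (n + 1 ≤ n)) := rfl
        rw [e0] at h0
        rw [e1] at h1
        rw [← h1] at h0
        simp [Nat.not_succ_le_self] at h0
      · -- `c i = c 0` holds for `i ≤ n`
        rw [ThetaAux.realize_eqSent]
        show ULift.up (decide (i ≤ n)) = ULift.up (decide ((0 : ℕ) ≤ n))
        simp [Set.mem_Iic.1 hi]
    exact Theory.Model.isSatisfiable (ULift.{u} Bool)
  -- compactness: the union is satisfiable
  have hUsat : Theory.IsSatisfiable (⋃ n, T n) := by
    rw [Theory.isSatisfiable_directed_union_iff hmono.directed_le]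
    exact hsat
  obtain ⟨M0⟩ := hUsat
  -- lift the model to `Type u`
  let N : Type u := ULift.{u} M0
  letI : (Language.constantsOn ℕ).Structure N :=
    Equiv.inducedStructure (Equiv.ulift.symm : M0 ≃ N)
  have g := Equiv.inducedStructureEquiv (L := Language.constantsOn ℕ)
    (Equiv.ulift.symm : M0 ≃ N)
  haveI : N ⊨ (⋃ n, T n) := StrongHomClass.theory_model g
  haveI : Nonempty N := ⟨Equiv.ulift.symm (Classical.arbitrary M0)⟩
  -- all constants in `N` are equal
  have hall : ∀ c : (Language.constantsOn ℕ).Constants, (c : N) =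
      ((ThetaAux.con 0 : N)) := by
    intro c
    have hc : c = ThetaAux.con (c : ℕ) := rfl
    rw [hc]
    have hmem : ThetaAux.eqSent (c : ℕ) ∈ ⋃ n, T n :=
      Set.mem_iUnion.2 ⟨(c : ℕ), Set.mem_insert_of_mem _ ⟨(c : ℕ), Set.mem_Iic.2 le_rfl, rfl⟩⟩
    have := Theory.realize_sentence_of_mem (M := N) (⋃ n, T n) hmem
    exact ThetaAux.realize_eqSent.1 this
  have hsing : ∃ S : (Language.constantsOn ℕ).Substructure N, ∃ a : N, (S : Set N) = {a} :=
    ThetaAux.singleton_iff.2 ⟨_, hall⟩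
  have hpsiN : N ⊨ ψ := (hψ N ‹Nonempty N›).2 hsing
  have hnot : N ⊨ ψ.not := by
    refine Theory.realize_sentence_of_mem (M := N) (⋃ n, T n) ?_
    exact Set.mem_iUnion.2 ⟨0, Set.mem_insert _ _⟩
  rw [Sentence.Realize, Formula.realize_not] at hnot
  exact hnot hpsiN
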